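/- Let m ≥ 1 and r ≥ 1 be integers with gcd(m, r) = 1. Then gcd(2^m + 1, 2^r + 1) = 3 if and only if both m and r are odd. -/

import Mathlib

lemma three_dvd_two_pow_add_one_iff (k : ℕ) : 3 ∣ 2 ^ k + 1 ↔ Odd k := by
  rw [← ZMod.natCast_eq_zero_iff (2 ^ k + 1) 3]
  push_cast
  have h2 : (2 : ZMod 3) = -1 := by decide
  rw [h2]
  rcases Nat.even_or_odd k with he | ho
  · rw [he.neg_one_pow]
    constructor
    · intro hcontra; exact absurd hcontra (by decide)
    · intro hodd; exact absurd hodd (Nat.not_odd_iff_even.mpr he)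
  · rw [ho.neg_one_pow]
    constructor
    · intro _; exact ho
    · intro _; decide

lemma dvd_pow_two_mul_sub_one (k : ℕ) : 2 ^ k + 1 ∣ 2 ^ (2 * k) - 1 := by
  refine ⟨2 ^ k - 1, ?_⟩
  calc 2 ^ (2 * k) - 1 = (2 ^ k) ^ 2 - 1 ^ 2 := by rw [mul_comm, pow_mul, one_pow]
    _ = (2 ^ k + 1) * (2 ^ k - 1) := Nat.sq_sub_sq _ _

theorem gcd_two_pow_add_one_eq_three_iff (m r : ℕ) (hm : 1 ≤ m) (hr : 1 ≤ r)
    (h : Nat.gcd m r = 1) :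
    Nat.gcd (2 ^ m + 1) (2 ^ r + 1) = 3 ↔ Odd m ∧ Odd r := by
  set g := Nat.gcd (2 ^ m + 1) (2 ^ r + 1) with hg
  have hgpos : 0 < g := Nat.gcd_pos_of_pos_left _ (by positivity)
  haveI : NeZero g := ⟨hgpos.ne'⟩
  have key : ∀ k : ℕ, g ∣ 2 ^ k + 1 → (2 : ZMod g) ^ (2 * k) = 1 := by
    intro k hk
    have hdvd : g ∣ 2 ^ (2 * k) - 1 := hk.trans (dvd_pow_two_mul_sub_one k)
    have hmod : 2 ^ (2 * k) ≡ 1 [MOD g] :=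
      ((Nat.modEq_iff_dvd' Nat.one_le_two_pow).mpr hdvd).symm
    have := (ZMod.natCast_eq_natCast_iff _ _ _).mpr hmod
    push_cast at this
    exact this
  have h1 := key m (Nat.gcd_dvd_left _ _)
  have h2 := key r (Nat.gcd_dvd_right _ _)
  have hsq : (2 : ZMod g) ^ 2 = 1 := by
    have := pow_gcd_eq_one.mpr ⟨h1, h2⟩
    rwa [Nat.gcd_mul_left, h, mul_one] at this
  have hg3 : g ∣ 3 := by
    have h3 : ((3 : ℕ) : ZMod g) = 0 := by
      push_cast
      calc (3 : ZMod g) = 2 ^ 2 - 1 := by norm_num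
        _ = 0 := by rw [hsq]; ring
    exact (ZMod.natCast_eq_zero_iff 3 g).mp h3
  constructor
  · intro heq
    have h3l : 3 ∣ 2 ^ m + 1 := by rw [← heq]; exact Nat.gcd_dvd_left _ _
    have h3r : 3 ∣ 2 ^ r + 1 := by rw [← heq]; exact Nat.gcd_dvd_right _ _
    exact ⟨(three_dvd_two_pow_add_one_iff m).mp h3l,
           (three_dvd_two_pow_add_one_iff r).mp h3r⟩
  · rintro ⟨hom, hor⟩
    exact Nat.dvd_antisymm hg3
      (Nat.dvd_gcd ((three_dvd_two_pow_add_one_iff m).mpr hom)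
        ((three_dvd_two_pow_add_one_iff r).mpr hor))
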